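/- Assume λ_Q < 0 and Condition 7 holds. Let X = {(y,t) : ‖y‖ ≤ 1, Ay − b ∈ 𝒦, yᵀQy + 2gᵀy ≤ t}. Then every extreme point (y,t) of conv(X) satisfies ‖y‖ = 1. -/

import Mathlib

open Matrix

theorem extreme_points_unit_norm {n m : ℕ} (Q : Matrix (Fin n) (Fin n) ℝ)
    (g : EuclideanSpace ℝ (Fin n)) (lamQ : ℝ)
    (A : Matrix (Fin m) (Fin n) ℝ) (b : Fin m → ℝ) (K : Set (Fin m → ℝ))
    (hQ : Q.IsSymm)
    (hlb : ∀ y : EuclideanSpace ℝ (Fin n), lamQ * ‖y‖ ^ 2 ≤ y ⬝ᵥ Q.mulVec y)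
    (hev : ∃ v : EuclideanSpace ℝ (Fin n), v ≠ 0 ∧ Q.mulVec v = lamQ • (v : Fin n → ℝ))
    (hneg : lamQ < 0)
    (hKclosed : IsClosed K) (hKconv : Convex ℝ K)
    (hKcone : ∀ x ∈ K, ∀ c : ℝ, 0 ≤ c → c • x ∈ K)
    (hcond7 : ∃ d : EuclideanSpace ℝ (Fin n), d ≠ 0 ∧
      Q.mulVec d = lamQ • (d : Fin n → ℝ) ∧ A.mulVec d ∈ K ∧ -A.mulVec d ∈ K)
    (X : Set (EuclideanSpace ℝ (Fin n) × ℝ))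
    (hX : X = {p : EuclideanSpace ℝ (Fin n) × ℝ | ‖p.1‖ ≤ 1 ∧ A.mulVec p.1 - b ∈ K ∧
      p.1 ⬝ᵥ Q.mulVec p.1 + 2 * (g ⬝ᵥ p.1) ≤ p.2}) :
    ∀ p ∈ Set.extremePoints ℝ (convexHull ℝ X), ‖p.1‖ = 1 := by
  rintro ⟨y, t⟩ hp
  obtain ⟨d, hd0, hQd, hAdK, hAdK'⟩ := hcond7
  have hpX : ((y, t) : EuclideanSpace ℝ (Fin n) × ℝ) ∈ X :=
    extremePoints_convexHull_subset hp
  rw [hX] at hpX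
  obtain ⟨hy1, hyK, hyq⟩ := hpX
  by_contra hne
  have hylt : ‖y‖ < 1 := lt_of_le_of_ne hy1 hne
  have hd' : (0:ℝ) < ‖d‖ := norm_pos_iff.mpr hd0
  set s : ℝ := (1 - ‖y‖) / ‖d‖ with hs
  have hs0 : 0 < s := div_pos (by linarith) hd'
  have hsd : s * ‖d‖ = 1 - ‖y‖ := div_mul_cancel₀ _ (ne_of_gt hd')
  -- K is closed under addition
  have hKadd : ∀ a ∈ K, ∀ c ∈ K, a + c ∈ K := by
    intro a ha c hc
    have h := hKconv ha hc (by norm_num : (0:ℝ) ≤ 1/2) (by norm_num : (0:ℝ) ≤ 1/2)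
      (by norm_num)
    have h2 := hKcone _ h 2 (by norm_num)
    have : (2:ℝ) • ((1/2 : ℝ) • a + (1/2 : ℝ) • c) = a + c := by
      module
    rwa [this] at h2
  -- norm bounds
  have hnorm : ∀ ε : ℝ, |ε| ≤ s → ‖y + ε • d‖ ≤ 1 := by
    intro ε hε
    calc ‖y + ε • d‖ ≤ ‖y‖ + ‖ε • d‖ := norm_add_le _ _
      _ = ‖y‖ + |ε| * ‖d‖ := by rw [norm_smul, Real.norm_eq_abs]
      _ ≤ ‖y‖ + s * ‖d‖ := by
          have := mul_le_mul_of_nonneg_right hε (le_of_lt hd')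
          linarith
      _ = 1 := by rw [hsd]; ring
  -- symmetry consequence
  have hdQy : ∀ z : EuclideanSpace ℝ (Fin n),
      (d : Fin n → ℝ) ⬝ᵥ Q.mulVec z = lamQ * ((z : Fin n → ℝ) ⬝ᵥ d) := by
    intro z
    rw [Matrix.dotProduct_mulVec, ← Matrix.mulVec_transpose, hQ.eq, hQd,
      smul_dotProduct, dotProduct_comm]
    rfl
  have hyQd : (y : Fin n → ℝ) ⬝ᵥ Q.mulVec d = lamQ * ((y : Fin n → ℝ) ⬝ᵥ d) := by
    rw [hQd, dotProduct_smul]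
    rfl
  set c : ℝ := 2 * (lamQ * ((y : Fin n → ℝ) ⬝ᵥ d) + g ⬝ᵥ d) with hc
  -- quadratic expansion
  have key : ∀ ε : ℝ,
      ((y + ε • d : EuclideanSpace ℝ (Fin n)) : Fin n → ℝ) ⬝ᵥ
        Q.mulVec ((y + ε • d : EuclideanSpace ℝ (Fin n)) : Fin n → ℝ) +
        2 * (g ⬝ᵥ ((y + ε • d : EuclideanSpace ℝ (Fin n)) : Fin n → ℝ)) =
      (y : Fin n → ℝ) ⬝ᵥ Q.mulVec y + 2 * (g ⬝ᵥ (y : Fin n → ℝ)) + ε * c +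
        ε ^ 2 * (lamQ * ((d : Fin n → ℝ) ⬝ᵥ d)) := by
    intro ε
    have expand : ((y + ε • d : EuclideanSpace ℝ (Fin n)) : Fin n → ℝ) =
        (y : Fin n → ℝ) + ε • (d : Fin n → ℝ) := rfl
    rw [expand, Matrix.mulVec_add, Matrix.mulVec_smul, dotProduct_add,
      add_dotProduct, add_dotProduct, dotProduct_add,
      smul_dotProduct, smul_dotProduct, dotProduct_smul,
      dotProduct_smul, hdQy y, hyQd, hdQy d]
    have hgsd : g ⬝ᵥ ((ε • d : EuclideanSpace ℝ (Fin n)) : Fin n → ℝ)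
        = ε * (g ⬝ᵥ (d : Fin n → ℝ)) := by
      simp only [dotProduct, PiLp.smul_apply, smul_eq_mul, Finset.mul_sum]
      exact Finset.sum_congr rfl fun i _ => by ring
    simp only [dotProduct_smul, smul_eq_mul, hc, hgsd]
    ring
  -- the two auxiliary points
  have hXmem : ∀ ε : ℝ, |ε| ≤ s →
      ((y + ε • d, t + ε * c) : EuclideanSpace ℝ (Fin n) × ℝ) ∈ X := by
    intro ε hε
    rw [hX]
    refine ⟨hnorm ε hε, ?_, ?_⟩
    · have : A.mulVec ((y + ε • d : EuclideanSpace ℝ (Fin n)) : Fin n → ℝ) - b =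
          (A.mulVec y - b) + ε • A.mulVec d := by
        have expand : ((y + ε • d : EuclideanSpace ℝ (Fin n)) : Fin n → ℝ) =
            (y : Fin n → ℝ) + ε • (d : Fin n → ℝ) := rfl
        rw [expand, Matrix.mulVec_add, Matrix.mulVec_smul]
        abel
      rw [this]
      rcases le_or_gt 0 ε with h0 | h0
      · exact hKadd _ hyK _ (hKcone _ hAdK ε h0)
      · have : ε • A.mulVec d = (-ε) • (-A.mulVec d) := by module
        rw [this]
        exact hKadd _ hyK _ (hKcone _ hAdK' (-ε) (by linarith))
    · show _ ≤ t + ε * c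
      rw [key ε]
      have hdd : (0:ℝ) ≤ (d : Fin n → ℝ) ⬝ᵥ d := by
        apply Finset.sum_nonneg
        intro i _
        exact mul_self_nonneg _
      have h1 : ε ^ 2 * (lamQ * ((d : Fin n → ℝ) ⬝ᵥ d)) ≤ 0 :=
        mul_nonpos_of_nonneg_of_nonpos (sq_nonneg _)
          (mul_nonpos_of_nonpos_of_nonneg (le_of_lt hneg) hdd)
      have := hyq
      simp only at this
      linarith
  have hsabs : |s| ≤ s := by rw [abs_of_pos hs0]
  have hsabs' : |(-s)| ≤ s := by rw [abs_neg, abs_of_pos hs0]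
  have hm1 := hXmem s hsabs
  have hm2 := hXmem (-s) hsabs'
  have hseg : ((y, t) : EuclideanSpace ℝ (Fin n) × ℝ) ∈
      openSegment ℝ ((y + s • d, t + s * c) : EuclideanSpace ℝ (Fin n) × ℝ)
        ((y + (-s) • d, t + (-s) * c) : EuclideanSpace ℝ (Fin n) × ℝ) := by
    refine ⟨1/2, 1/2, by norm_num, by norm_num, by norm_num, ?_⟩
    apply Prod.ext
    · show (1/2 : ℝ) • (y + s • d) + (1/2 : ℝ) • (y + (-s) • d) = y
      module
    · show (1/2 : ℝ) * (t + s * c) + (1/2 : ℝ) * (t + (-s) * c) = t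
      ring
  have hext := hp.2 (subset_convexHull ℝ X hm1) (subset_convexHull ℝ X hm2) hseg
  have h1 : y + s • d = y := congrArg Prod.fst hext
  have : s • d = 0 := by
    calc s • d = (y + s • d) - y := by abel
      _ = 0 := by rw [h1]; abel
  rcases smul_eq_zero.mp this with h | h
  · exact absurd h (ne_of_gt hs0)
  · exact hd0 h
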